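/- arXiv:0804.2038 — 2 statements merged into one kernel-verified Lean document; each statement's English description precedes it below -/
import Mathlib

section
/- If n = 7^c ∏ p_i^{v_i} ∏ q_j^{w_j} with p_i ≡ 1,2,4 (mod 7) and q_j ≡ 3,5,6 (mod 7), then ∑_{d|n} d^2 ((n/d)/7) = 7^{2c} ∏_i (1 - p_i^{2v_i+2})/(1 - p_i^2) · ∏_j ((-1)^{w_j} + q_j^{2w_j+2})/(1 + q_j^2), where (m/7) is the Legendre symbol. -/
open PowerSeries Finset

instance : Fact (Nat.Prime 7) := ⟨by norm_num⟩

/-- The Legendre symbol mod 7 as an arithmetic function. -/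
noncomputable def chi7 : ArithmeticFunction ℚ :=
  ⟨fun n => (legendreSym 7 (n : ℤ) : ℚ), by simp [legendreSym.at_zero]⟩

/-- Squaring as an arithmetic function over ℚ. -/
def sqfun : ArithmeticFunction ℚ := ⟨fun n => (n : ℚ) ^ 2, by simp⟩

lemma chi7_apply (n : ℕ) : chi7 n = (legendreSym 7 (n : ℤ) : ℚ) := rfl

lemma sqfun_apply (n : ℕ) : sqfun n = (n : ℚ) ^ 2 := rfl

lemma chi7_mult : chi7.IsMultiplicative := by
  constructor
  · simp [chi7_apply, legendreSym.at_one]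
  · intro m n _
    simp only [chi7_apply]
    push_cast
    rw [legendreSym.mul]
    push_cast
    ring

lemma sqfun_mult : sqfun.IsMultiplicative := by
  constructor
  · simp [sqfun_apply]
  · intro m n _
    simp [sqfun_apply]
    ring

noncomputable def Ffun : ArithmeticFunction ℚ := sqfun * chi7

lemma Ffun_mult : Ffun.IsMultiplicative := sqfun_mult.mul chi7_mult

lemma Ffun_apply (n : ℕ) :
    Ffun n = ∑ d ∈ n.divisors, (d : ℚ) ^ 2 * (legendreSym 7 ((n / d : ℕ) : ℤ) : ℚ) := by
  rw [Ffun, ArithmeticFunction.mul_apply]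
  rw [Nat.sum_divisorsAntidiagonal (f := fun a b => sqfun a * chi7 b)]
  rfl

lemma legendre_pow (m k : ℕ) :
    (legendreSym 7 ((m ^ k : ℕ) : ℤ) : ℚ) = ((legendreSym 7 (m : ℤ) : ℚ)) ^ k := by
  induction k with
  | zero => simp [legendreSym.at_one]
  | succ k ih =>
    push_cast [pow_succ, legendreSym.mul] at *
    rw [ih]

lemma Ffun_prime_pow (p k : ℕ) (hp : p.Prime) :
    Ffun (p ^ k) =
      ∑ i ∈ range (k + 1), (p : ℚ) ^ (2 * i) * (legendreSym 7 (p : ℤ) : ℚ) ^ (k - i) := by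
  rw [Ffun_apply, Nat.sum_divisors_prime_pow hp]
  refine Finset.sum_congr rfl fun i hi => ?_
  have hik : i ≤ k := by
    have := Finset.mem_range.mp hi; omega
  rw [Nat.pow_div hik hp.pos, legendre_pow]
  push_cast
  rw [← pow_mul, mul_comm i 2]

lemma geom1 (x : ℚ) (hx : 1 - x ^ 2 ≠ 0) (k : ℕ) :
    ∑ i ∈ range (k + 1), x ^ (2 * i) = (1 - x ^ (2 * k + 2)) / (1 - x ^ 2) := by
  induction k with
  | zero => simp; field_simp
  | succ k ih =>
    rw [Finset.sum_range_succ, ih]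
    field_simp
    ring

lemma geom2 (x : ℚ) (hx : 1 + x ^ 2 ≠ 0) (k : ℕ) :
    ∑ i ∈ range (k + 1), x ^ (2 * i) * (-1 : ℚ) ^ (k - i) =
      ((-1) ^ k + x ^ (2 * k + 2)) / (1 + x ^ 2) := by
  induction k with
  | zero => simp; field_simp
  | succ k ih =>
    rw [Finset.sum_range_succ]
    have h1 : ∑ i ∈ range (k + 1), x ^ (2 * i) * (-1 : ℚ) ^ (k + 1 - i) =
        -∑ i ∈ range (k + 1), x ^ (2 * i) * (-1 : ℚ) ^ (k - i) := by
      rw [← Finset.sum_neg_distrib]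
      refine Finset.sum_congr rfl fun i hi => ?_
      have hik : i ≤ k := by have := Finset.mem_range.mp hi; omega
      have : k + 1 - i = (k - i) + 1 := by omega
      rw [this, pow_succ]
      ring
    rw [h1, ih, Nat.sub_self, pow_zero]
    field_simp
    ring

lemma Ffun_seven_pow (c : ℕ) : Ffun (7 ^ c) = 7 ^ (2 * c) := by
  rw [Ffun_prime_pow 7 c (by norm_num)]
  have h7 : (legendreSym 7 ((7 : ℕ) : ℤ) : ℚ) = 0 := by norm_num [show legendreSym 7 7 = 0 by decide]
  rw [h7]
  rw [Finset.sum_eq_single c]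
  · simp
  · intro i hi hic
    have hik : i < c := by have := Finset.mem_range.mp hi; omega
    rw [zero_pow (by omega)]
    ring
  · intro h; exact absurd (Finset.self_mem_range_succ c) h

lemma Ffun_p_pow (p k : ℕ) (hp : p.Prime) (hl : (legendreSym 7 ((p : ℕ) : ℤ) : ℚ) = 1) :
    Ffun (p ^ k) = (1 - (p : ℚ) ^ (2 * k + 2)) / (1 - (p : ℚ) ^ 2) := by
  rw [Ffun_prime_pow p k hp, hl]
  have hp2 : (2 : ℚ) ≤ (p : ℚ) := by exact_mod_cast hp.two_le
  have hx : 1 - (p : ℚ) ^ 2 ≠ 0 := by nlinarith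
  simpa using geom1 (p : ℚ) hx k

lemma Ffun_q_pow (q k : ℕ) (hq : q.Prime) (hl : (legendreSym 7 ((q : ℕ) : ℤ) : ℚ) = -1) :
    Ffun (q ^ k) = ((-1) ^ k + (q : ℚ) ^ (2 * k + 2)) / (1 + (q : ℚ) ^ 2) := by
  rw [Ffun_prime_pow q k hq, hl]
  have hx : 1 + (q : ℚ) ^ 2 ≠ 0 := by positivity
  exact geom2 (q : ℚ) hx k

lemma legendre_of_mod (p r : ℕ) (h : p % 7 = r) :
    legendreSym 7 (p : ℤ) = legendreSym 7 (r : ℤ) := by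
  rw [legendreSym.mod 7 (p : ℤ)]
  congr 1
  omega

/-- If `n = 7^c * ∏ p_i^{v_i} * ∏ q_j^{w_j}` with `p_i ≡ 1,2,4 (mod 7)`,
`q_j ≡ 3,5,6 (mod 7)` and `b = ∑ w_j`, then
`∑_{d|n} d^2 ((n/d)/7) = 7^{2c} ∏_i (1-p_i^{2v_i+2})/(1-p_i^2)
  * ∏_j ((-1)^{w_j}+q_j^{2w_j+2})/(1+q_j^2)`. -/
theorem K_coeff_formula (n c b : ℕ) (P Q : Finset ℕ) (v w : ℕ → ℕ)
    (hP : ∀ p ∈ P, Nat.Prime p ∧ (p % 7 = 1 ∨ p % 7 = 2 ∨ p % 7 = 4))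
    (hQ : ∀ q ∈ Q, Nat.Prime q ∧ (q % 7 = 3 ∨ q % 7 = 5 ∨ q % 7 = 6))
    (hn : n = 7 ^ c * (∏ p ∈ P, p ^ v p) * (∏ q ∈ Q, q ^ w q))
    (hb : b = ∑ q ∈ Q, w q) :
    (∑ d ∈ n.divisors, (d : ℚ) ^ 2 * (legendreSym 7 ((n / d : ℕ) : ℤ) : ℚ)) =
      7 ^ (2 * c) * (∏ p ∈ P, (1 - (p : ℚ) ^ (2 * v p + 2)) / (1 - (p : ℚ) ^ 2)) * (∏ q ∈ Q, ((-1) ^ w q + (q : ℚ) ^ (2 * w q + 2)) / (1 + (q : ℚ) ^ 2)) := by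
  -- Legendre symbol values
  have hPl : ∀ p ∈ P, (legendreSym 7 ((p : ℕ) : ℤ) : ℚ) = 1 := by
    intro p hp
    obtain ⟨_, h | h | h⟩ := hP p hp <;>
      rw [legendre_of_mod p _ h] <;> norm_num <;> decide
  have hQl : ∀ q ∈ Q, (legendreSym 7 ((q : ℕ) : ℤ) : ℚ) = -1 := by
    intro q hq
    obtain ⟨_, h | h | h⟩ := hQ q hq <;>
      rw [legendre_of_mod q _ h] <;> norm_num <;> decide
  -- primes are not 7
  have hPne7 : ∀ p ∈ P, p ≠ 7 := by intro p hp h; obtain ⟨_, h'⟩ := hP p hp; omega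
  have hQne7 : ∀ q ∈ Q, q ≠ 7 := by intro q hq h; obtain ⟨_, h'⟩ := hQ q hq; omega
  have hPQne : ∀ p ∈ P, ∀ q ∈ Q, p ≠ q := by
    intro p hp q hq h; obtain ⟨_, h1⟩ := hP p hp; obtain ⟨_, h2⟩ := hQ q hq; omega
  have h7 : Nat.Prime 7 := by norm_num
  -- coprimalities
  have hcopA : Nat.Coprime (7 ^ c) (∏ p ∈ P, p ^ v p) := by
    apply Nat.Coprime.pow_left
    apply Nat.Coprime.prod_right
    intro p hp
    exact ((Nat.coprime_primes h7 (hP p hp).1).mpr (fun h => hPne7 p hp h.symm)).pow_right _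
  have hcopB : Nat.Coprime (7 ^ c) (∏ q ∈ Q, q ^ w q) := by
    apply Nat.Coprime.pow_left
    apply Nat.Coprime.prod_right
    intro q hq
    exact ((Nat.coprime_primes h7 (hQ q hq).1).mpr (fun h => hQne7 q hq h.symm)).pow_right _
  have hcopC : Nat.Coprime (∏ p ∈ P, p ^ v p) (∏ q ∈ Q, q ^ w q) := by
    apply Nat.Coprime.prod_left
    intro p hp
    apply Nat.Coprime.prod_right
    intro q hq
    exact Nat.Coprime.pow _ _ ((Nat.coprime_primes (hP p hp).1 (hQ q hq).1).mpr (hPQne p hp q hq))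
  -- multiplicativity
  have key : Ffun n = Ffun (7 ^ c) * Ffun (∏ p ∈ P, p ^ v p) * Ffun (∏ q ∈ Q, q ^ w q) := by
    rw [hn, Ffun_mult.map_mul_of_coprime (Nat.Coprime.mul hcopB hcopC),
      Ffun_mult.map_mul_of_coprime hcopA]
  have hprodP : Ffun (∏ p ∈ P, p ^ v p) = ∏ p ∈ P, Ffun (p ^ v p) := by
    apply ArithmeticFunction.IsMultiplicative.map_prod _ Ffun_mult
    intro x hx y hy hxy
    exact Nat.Coprime.pow _ _ ((Nat.coprime_primes (hP x hx).1 (hP y hy).1).mpr hxy)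
  have hprodQ : Ffun (∏ q ∈ Q, q ^ w q) = ∏ q ∈ Q, Ffun (q ^ w q) := by
    apply ArithmeticFunction.IsMultiplicative.map_prod _ Ffun_mult
    intro x hx y hy hxy
    exact Nat.Coprime.pow _ _ ((Nat.coprime_primes (hQ x hx).1 (hQ y hy).1).mpr hxy)
  rw [← Ffun_apply, key, hprodP, hprodQ, Ffun_seven_pow]
  congr 1
  · congr 1
    exact Finset.prod_congr rfl fun p hp => Ffun_p_pow p (v p) (hP p hp).1 (hPl p hp)
  · exact Finset.prod_congr rfl fun q hq => Ffun_q_pow q (w q) (hQ q hq).1 (hQl q hq)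
end

section
/- For every n ≥ 1, ∑_{d|n} d^2 ((n/d)/7) > 0, where (m/7) is the Legendre symbol modulo 7. -/
open PowerSeries Finset

lemma leg_ge (a : ℤ) : -1 ≤ legendreSym 7 a := by
  rcases eq_or_ne ((a : ZMod 7)) 0 with h | h
  · rw [(legendreSym.eq_zero_iff 7 a).2 h]; norm_num
  · rcases legendreSym.eq_one_or_neg_one 7 h with h1 | h1 <;> simp [h1]

lemma tele (n : ℕ) (hn : 1 ≤ n) :
    ∑ e ∈ Icc 2 n, ((1 : ℚ) / (e - 1) - 1 / e) = 1 - 1 / n := by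
  induction n, hn using Nat.le_induction with
  | base => simp
  | succ n hn ih =>
    rw [Finset.sum_Icc_succ_top (by omega : 2 ≤ n + 1), ih]
    have h0 : (n : ℚ) ≠ 0 := by positivity
    have h1 : (n : ℚ) + 1 ≠ 0 := by positivity
    push_cast
    field_simp
    rw [add_sub_cancel_right]; field_simp; ring

lemma divisor_sq_bound (n : ℕ) (hn : 1 ≤ n) :
    ∑ e ∈ n.divisors.erase 1, ((n / e : ℕ) : ℚ) ^ 2 < (n : ℚ) ^ 2 := by
  have hsub : n.divisors.erase 1 ⊆ Icc 2 n := by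
    intro e he
    rcases Finset.mem_erase.1 he with ⟨he1, he2⟩
    rcases Nat.mem_divisors.1 he2 with ⟨hdvd, hn0⟩
    have h1 := Nat.le_of_dvd (by omega) hdvd
    have h2 : e ≠ 0 := by rintro rfl; simp at hdvd; omega
    exact Finset.mem_Icc.2 ⟨by omega, h1⟩
  calc ∑ e ∈ n.divisors.erase 1, ((n / e : ℕ) : ℚ) ^ 2
      ≤ ∑ e ∈ Icc 2 n, ((n / e : ℕ) : ℚ) ^ 2 :=
        Finset.sum_le_sum_of_subset_of_nonneg hsub (fun i _ _ => by positivity)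
    _ ≤ ∑ e ∈ Icc 2 n, (n : ℚ) ^ 2 * (1 / (e - 1) - 1 / e) := by
        apply Finset.sum_le_sum
        intro e he
        rcases Finset.mem_Icc.1 he with ⟨h2, _⟩
        have hq : (2 : ℚ) ≤ (e : ℚ) := by exact_mod_cast h2
        have hcast : ((n / e : ℕ) : ℚ) ≤ (n : ℚ) / e := Nat.cast_div_le
        have hnn : (0 : ℚ) ≤ ((n / e : ℕ) : ℚ) := by positivity
        have hsq : ((n / e : ℕ) : ℚ) ^ 2 ≤ ((n : ℚ) / e) ^ 2 := by
          apply pow_le_pow_left₀ hnn hcast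
        refine hsq.trans ?_
        have he1 : (0 : ℚ) < (e : ℚ) - 1 := by linarith
        have he0 : (0 : ℚ) < (e : ℚ) := by linarith
        have key : (1 : ℚ) / (e - 1) - 1 / e = 1 / ((e - 1) * e) := by
          field_simp; ring
        rw [key, div_pow, div_eq_mul_one_div ((n:ℚ)^2) ((e:ℚ)^2)]
        apply mul_le_mul_of_nonneg_left _ (by positivity)
        apply one_div_le_one_div_of_le (by positivity)
        nlinarith
    _ = (n : ℚ) ^ 2 * (1 - 1 / n) := by rw [← Finset.mul_sum, tele n hn]
    _ < (n : ℚ) ^ 2 := by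
        have h0 : (0 : ℚ) < (n : ℚ) := by exact_mod_cast hn
        have h2 : (n : ℚ) ^ 2 * (1 / n) = n := by field_simp
        nlinarith [h2, h0]

/-- For every `n ≥ 1`, `∑_{d|n} d^2 ((n/d)/7) > 0`, where `(m/7)` is the Legendre
symbol modulo 7. -/
theorem K_coeff_pos (n : ℕ) (hn : 1 ≤ n) :
    0 < ∑ d ∈ n.divisors, (d : ℤ) ^ 2 * legendreSym 7 ((n / d : ℕ) : ℤ) := by
  have hn0 : n ≠ 0 := by omega
  have key : ∑ d ∈ n.divisors, (d : ℤ) ^ 2 * legendreSym 7 ((n / d : ℕ) : ℤ)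
      = ∑ e ∈ n.divisors, ((n / e : ℕ) : ℤ) ^ 2 * legendreSym 7 (e : ℤ) := by
    rw [← Nat.sum_div_divisors n (fun e => ((n / e : ℕ) : ℤ) ^ 2 * legendreSym 7 (e : ℤ))]
    apply Finset.sum_congr rfl
    intro d hd
    rw [Nat.div_div_self (Nat.mem_divisors.1 hd).1 hn0]
  rw [key]
  have h1mem : 1 ∈ n.divisors := Nat.one_mem_divisors.2 hn0
  rw [← Finset.add_sum_erase _ _ h1mem]
  have hbound : ∑ e ∈ n.divisors.erase 1, ((n / e : ℕ) : ℤ) ^ 2 < (n : ℤ) ^ 2 := by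
    have := divisor_sq_bound n hn
    exact_mod_cast this
  have hterm : ∀ e ∈ n.divisors.erase 1,
      -(((n / e : ℕ) : ℤ) ^ 2) ≤ ((n / e : ℕ) : ℤ) ^ 2 * legendreSym 7 (e : ℤ) := by
    intro e _
    have := mul_le_mul_of_nonneg_left (leg_ge (e : ℤ)) (sq_nonneg ((n / e : ℕ) : ℤ))
    simpa [mul_comm] using this
  have hsum : -(∑ e ∈ n.divisors.erase 1, ((n / e : ℕ) : ℤ) ^ 2)
      ≤ ∑ e ∈ n.divisors.erase 1, ((n / e : ℕ) : ℤ) ^ 2 * legendreSym 7 (e : ℤ) := by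
    rw [← Finset.sum_neg_distrib]
    exact Finset.sum_le_sum hterm
  have hfirst : ((n / 1 : ℕ) : ℤ) ^ 2 * legendreSym 7 ((1 : ℕ) : ℤ) = (n : ℤ) ^ 2 := by
    simp [legendreSym.at_one]
  rw [hfirst]
  linarith
end
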